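/- Let R be a finite ring with unity and let K ⊊ I be left ideals of R. If ⋂_{M ∈ M_R(I)} M ⊆ K, then K can be expressed as an intersection of some maximal R-left ideals of I; moreover, K = ⋂_{M ∈ M_R(I,K)} M. -/

import Mathlib

open scoped BigOperators
open Classical
set_option maxHeartbeats 1000000

variable {R : Type*}

/-- The left ideal of `R` generated by `x`, i.e. `(x)_ℓ`. -/
def lgen [Ring R] (x : R) : Submodule R R := Submodule.span R {x}

/-- `[x]_ℓ = {y : (y)_ℓ = (x)_ℓ}`. -/
def classL [Ring R] (x : R) : Set R := {y | lgen y = lgen x}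

/-- The character sum `C_χ(x) = ∑_{s ∈ [x]_ℓ} χ(s)`. -/
noncomputable def CchiL [Ring R] (χ : AddChar R ℂ) (x : R) : ℂ :=
  ∑ᶠ s ∈ classL x, χ s

/-- The set `M_R(J)` of maximal `R`-left ideals of `J`. -/
def maxROf [Ring R] (J : Submodule R R) : Set (Submodule R R) :=
  {M | M < J ∧ ∀ I' : Submodule R R, M < I' → ¬ I' < J}

/-- The set `M_R(J, K)` of maximal `R`-left ideals of `J` containing `K`. -/
def maxROfAbove [Ring R] (J K : Submodule R R) : Set (Submodule R R) :=
  {M | M ∈ maxROf J ∧ K ≤ M}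

/-- Intersection of the family `E` of left ideals, with the convention that the
empty intersection is `J`. -/
noncomputable def interIn [Ring R] (J : Submodule R R) (E : Set (Submodule R R)) :
    Submodule R R :=
  if E = ∅ then J else sInf E

/-- The Möbius function `μ_R(I, J)` on left ideals of `R`. -/
noncomputable def muR [Ring R] (I J : Submodule R R) : ℤ :=
  if I = J then 1
  else if I < J ∧ ∃ E : Set (Submodule R R),
      E ⊆ maxROf J ∧ E.Nonempty ∧ interIn J E = I then
    (Nat.card {E : Set (Submodule R R) //
        E ⊆ maxROf J ∧ interIn J E = I ∧ Even (Nat.card E)} : ℤ)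
      - (Nat.card {E : Set (Submodule R R) //
        E ⊆ maxROf J ∧ interIn J E = I ∧ Odd (Nat.card E)} : ℤ)
  else 0

/-- The function `φ_R(I, J)` on left ideals of `R`. -/
noncomputable def phiR [Ring R] (I J : Submodule R R) : ℂ :=
  if I = J then 1
  else if I < J ∧ ∃ E : Set (Submodule R R),
      E ⊆ maxROf J ∧ E.Nonempty ∧ interIn J E = I then
    ∏ᶠ M ∈ maxROfAbove J I, ((Nat.card J : ℂ) / (Nat.card M : ℂ) - 1)
  else 1



section Aux

variable [Ring R] [Fintype R]

private instance finSubmod : Finite (Submodule R R) :=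
  Finite.of_injective (fun N => (N : Set R)) SetLike.coe_injective

/-- Every proper `N < I` lies below some maximal `R`-left ideal of `I`. -/
private lemma exists_max_above {N I : Submodule R R} (hNI : N < I) :
    ∃ M ∈ maxROf I, N ≤ M := by
  obtain ⟨M, ⟨hNM, hMI⟩, hmax⟩ :=
    Set.Finite.exists_maximalFor id {M : Submodule R R | N ≤ M ∧ M < I}
      (Set.toFinite _) ⟨N, le_refl N, hNI⟩
  refine ⟨M, ⟨hMI, ?_⟩, hNM⟩
  intro I' hMI' hI'I
  have := hmax (j := I') ⟨hNM.trans hMI'.le, hI'I⟩ hMI'.le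
  exact hMI'.ne (le_antisymm hMI'.le this)

private lemma coatom_sup {M I X : Submodule R R} (hM : M ∈ maxROf I)
    (hXI : X ≤ I) (hXM : ¬ X ≤ M) : M ⊔ X = I := by
  have h1 : M < M ⊔ X := lt_of_le_of_ne le_sup_left (by
    intro hEq
    exact hXM (hEq ▸ le_sup_right))
  have h2 : M ⊔ X ≤ I := sup_le hM.1.le hXI
  rcases lt_or_eq_of_le h2 with h3 | h3
  · exact absurd h3 (hM.2 _ h1)
  · exact h3

/-- Complement lemma: any `P ≤ I` has a complement over `sInf (maxROf I)`. -/
private lemma exists_complement {P I : Submodule R R} (hPI : P ≤ I) :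
    ∃ E ≤ I, E ⊔ P = I ∧ E ⊓ P ≤ sInf (maxROf I) := by
  obtain ⟨E, ⟨hEI, hEP⟩, hmin⟩ :=
    Set.Finite.exists_minimalFor id {E : Submodule R R | E ≤ I ∧ E ⊔ P = I}
      (Set.toFinite _) ⟨I, le_refl I, sup_eq_left.mpr hPI⟩
  refine ⟨E, hEI, hEP, le_sInf ?_⟩
  intro M hM
  by_contra hEPM
  have hsup : (E ⊓ P) ⊔ M = I := by
    rw [sup_comm]; exact coatom_sup hM (le_trans inf_le_left hEI) hEPM
  have hmod : ((E ⊓ P) ⊔ M) ⊓ E = (E ⊓ P) ⊔ M ⊓ E :=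
    sup_inf_assoc_of_le M inf_le_left
  have hE : E = (E ⊓ P) ⊔ M ⊓ E := by
    rw [← hmod, hsup]
    exact (inf_eq_right.mpr hEI).symm
  have h1 : E ≤ (M ⊓ E) ⊔ P :=
    hE.le.trans (sup_le (le_sup_of_le_right inf_le_right) le_sup_left)
  have hE'I : M ⊓ E ≤ I := le_trans inf_le_right hEI
  have hE'sup : (M ⊓ E) ⊔ P = I := by
    apply le_antisymm (sup_le hE'I hPI)
    rw [← hEP]
    exact sup_le h1 le_sup_right
  have heq : E = M ⊓ E := le_antisymm (hmin (j := M ⊓ E) ⟨hE'I, hE'sup⟩ inf_le_right) inf_le_right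
  have hEM : E ≤ M := by rw [heq]; exact inf_le_left
  exact hEPM (le_trans inf_le_left hEM)

/-- Separation: if `sInf (maxROf I) ≤ K ≤ I` and `x ∈ I \ K`, there is a
maximal `R`-left ideal of `I` containing `K` and avoiding `x`. -/
private lemma exists_max_avoiding {K I : Submodule R R}
    (hrad : sInf (maxROf I) ≤ K) (hKI : K ≤ I) {x : R} (hxI : x ∈ I)
    (hxK : x ∉ K) : ∃ M ∈ maxROf I, K ≤ M ∧ x ∉ M := by
  obtain ⟨E, hEI, hEP, hEPrad⟩ :
      ∃ E ≤ I, E ⊔ (K ⊔ Submodule.span R {x}) = I ∧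
        E ⊓ (K ⊔ Submodule.span R {x}) ≤ sInf (maxROf I) :=
    exists_complement (sup_le hKI (Submodule.span_le.mpr (by
      intro y hy; rcases hy with rfl; exact hxI)))
  have hxP : x ∈ K ⊔ Submodule.span R {x} :=
    Submodule.mem_sup_right (Submodule.mem_span_singleton_self x)
  have hDP : (K ⊔ E) ⊓ (K ⊔ Submodule.span R {x}) = K := by
    have h1 := sup_inf_assoc_of_le (x := K) E
      (le_sup_left : K ≤ K ⊔ Submodule.span R {x})
    rw [h1]
    exact sup_eq_left.mpr (le_trans hEPrad hrad)
  have hxD : x ∉ K ⊔ E := by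
    intro hx
    exact hxK (hDP ▸ (⟨hx, hxP⟩ : x ∈ (K ⊔ E) ⊓ (K ⊔ Submodule.span R {x})))
  have hDI : K ⊔ E ≤ I := sup_le hKI hEI
  obtain ⟨M, ⟨hDM, hMI, hxM⟩, hmax⟩ :=
    Set.Finite.exists_maximalFor id
      {N : Submodule R R | K ⊔ E ≤ N ∧ N ≤ I ∧ x ∉ N}
      (Set.toFinite _) ⟨K ⊔ E, le_refl _, hDI, hxD⟩
  have hMltI : M < I := lt_of_le_of_ne hMI (by rintro rfl; exact hxM hxI)
  refine ⟨M, ⟨hMltI, ?_⟩, le_trans le_sup_left hDM, hxM⟩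
  intro I' hMI' hI'I
  have hxI' : x ∈ I' := by
    by_contra hxI'
    exact hMI'.ne (le_antisymm hMI'.le (hmax (j := I') ⟨le_trans hDM hMI'.le, le_trans hI'I.le le_rfl, hxI'⟩ hMI'.le))
  have hI'top : I ≤ I' := by
    rw [← hEP]
    refine sup_le (le_trans le_sup_right (le_trans hDM hMI'.le)) (sup_le ?_ ?_)
    · exact le_trans le_sup_left (le_trans hDM hMI'.le)
    · exact Submodule.span_le.mpr (by intro y hy; rcases hy with rfl; exact hxI')
  exact absurd (lt_of_lt_of_le hI'I hI'top) (lt_irrefl I')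

end Aux

theorem stmt14 [Ring R] [Fintype R] (K I : Submodule R R) (hKI : K < I)
    (h : interIn I (maxROf I) ≤ K) :
    (∃ E : Set (Submodule R R), E ⊆ maxROf I ∧ E.Nonempty ∧ interIn I E = K) ∧
      K = sInf (maxROfAbove I K) := by
  have hne : (maxROf I).Nonempty := by
    obtain ⟨M, hM, _⟩ := exists_max_above hKI
    exact ⟨M, hM⟩
  have hrad : sInf (maxROf I) ≤ K := by
    rw [interIn, if_neg hne.ne_empty] at h
    exact h
  obtain ⟨x0, hx0I, hx0K⟩ := SetLike.exists_of_lt hKI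
  obtain ⟨M0, hM0, hKM0, hx0M0⟩ :=
    exists_max_avoiding hrad hKI.le hx0I hx0K
  have hFne : (maxROfAbove I K).Nonempty := ⟨M0, hM0, hKM0⟩
  have hKeq : K = sInf (maxROfAbove I K) := by
    apply le_antisymm (le_sInf fun M hM => hM.2)
    by_contra hle
    obtain ⟨y, hyInf, hyK⟩ := SetLike.not_le_iff_exists.mp hle
    have hyI : y ∈ I := by
      have hle1 : sInf (maxROfAbove I K) ≤ M0 :=
        sInf_le (show M0 ∈ maxROfAbove I K from ⟨hM0, hKM0⟩)
      exact hM0.1.le (hle1 hyInf)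
    obtain ⟨M, hM, hKM, hyM⟩ := exists_max_avoiding hrad hKI.le hyI hyK
    have hle2 : sInf (maxROfAbove I K) ≤ M :=
      sInf_le (show M ∈ maxROfAbove I K from ⟨hM, hKM⟩)
    exact hyM (hle2 hyInf)
  refine ⟨⟨maxROfAbove I K, fun M hM => hM.1, hFne, ?_⟩, hKeq⟩
  rw [interIn, if_neg hFne.ne_empty]
  exact hKeq.symm
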